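/- With μ' = μ(1+ε_i) componentwise, |ε_i| ≤ ε ≤ 1, and A a symmetric n×n matrix with entries in [0,1], the weighted matrices A_μ = √M A √M and A_{μ'} = √M' A √M' satisfy ‖A_{μ'} − A_μ‖_op ≤ 2εn‖A_μ‖_op. -/

import Mathlib

open scoped BigOperators
open Matrix

/-- The `ℓ² → ℓ²` operator norm of a real matrix. -/
noncomputable def opNorm {m n : ℕ} (A : Matrix (Fin m) (Fin n) ℝ) : ℝ :=
  ‖LinearMap.toContinuousLinearMap (Matrix.toEuclideanLin A)‖

lemma opNorm_nonneg {m n : ℕ} (A : Matrix (Fin m) (Fin n) ℝ) : 0 ≤ opNorm A :=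
  norm_nonneg _

lemma norm_toEuclideanLin {m n : ℕ} (A : Matrix (Fin m) (Fin n) ℝ)
    (x : EuclideanSpace ℝ (Fin n)) :
    ‖Matrix.toEuclideanLin A x‖ = Real.sqrt (∑ i, (A.mulVec (fun j => x j) i) ^ 2) := by
  rw [EuclideanSpace.norm_eq]
  congr 1
  refine Finset.sum_congr rfl fun i _ => ?_
  rw [Real.norm_eq_abs, sq_abs]
  rfl

lemma opNorm_le_sqrt_sum_sq {m n : ℕ} (A : Matrix (Fin m) (Fin n) ℝ) :
    opNorm A ≤ Real.sqrt (∑ i, ∑ j, (A i j) ^ 2) := by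
  refine ContinuousLinearMap.opNorm_le_bound _ (Real.sqrt_nonneg _) fun x => ?_
  simp only [LinearMap.coe_toContinuousLinearMap']
  rw [norm_toEuclideanLin, EuclideanSpace.norm_eq]
  have hx : ∀ j, ‖x j‖ ^ 2 = (x j) ^ 2 := fun j => by rw [Real.norm_eq_abs, sq_abs]
  simp only [hx]
  rw [← Real.sqrt_mul (by positivity)]
  apply Real.sqrt_le_sqrt
  rw [Finset.sum_mul]
  refine Finset.sum_le_sum fun i _ => ?_
  calc (A.mulVec (fun j => x j) i) ^ 2 = (∑ j, A i j * x j) ^ 2 := by rfl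
    _ ≤ (∑ j, (A i j) ^ 2) * ∑ j, (x j) ^ 2 :=
        Finset.sum_mul_sq_le_sq_mul_sq _ _ _

lemma sum_sq_le_opNorm {m n : ℕ} (A : Matrix (Fin m) (Fin n) ℝ) :
    ∑ i, ∑ j, (A i j) ^ 2 ≤ n * (opNorm A) ^ 2 := by
  rw [Finset.sum_comm]
  have h : ∀ j : Fin n, ∑ i, (A i j) ^ 2 ≤ (opNorm A) ^ 2 := by
    intro j
    have hb : ‖Matrix.toEuclideanLin A (EuclideanSpace.single j (1:ℝ))‖ ≤ opNorm A := by
      have := (LinearMap.toContinuousLinearMap (Matrix.toEuclideanLin A)).le_opNorm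
        (EuclideanSpace.single j (1:ℝ))
      simpa [opNorm, EuclideanSpace.norm_single] using this
    have h2 := pow_le_pow_left₀ (norm_nonneg _) hb 2
    rw [norm_toEuclideanLin] at h2
    have hv : (fun k => (EuclideanSpace.single j (1:ℝ)) k) = Pi.single j (1:ℝ) := by
      ext k; simp [EuclideanSpace.single_apply, Pi.single_apply]
    rw [hv] at h2
    simp only [Matrix.mulVec_single, mul_one] at h2
    rw [Real.sq_sqrt (by positivity)] at h2
    simpa [Matrix.col] using h2
  calc ∑ j, ∑ i, (A i j) ^ 2 ≤ ∑ _j : Fin n, (opNorm A) ^ 2 :=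
        Finset.sum_le_sum fun j _ => h j
    _ = n * (opNorm A) ^ 2 := by simp [Finset.sum_const, mul_comm]

theorem Amu_perturbation_bound (n : ℕ) (hn : 0 < n)
    (μ μ' : Fin n → ℝ) (hμpos : ∀ i, 0 < μ i) (hμ'pos : ∀ i, 0 < μ' i)
    (hμsum : ∑ i, μ i = 1) (hμ'sum : ∑ i, μ' i = 1)
    (ε : ℝ) (hε1 : ε ≤ 1) (εi : Fin n → ℝ) (hεi : ∀ i, |εi i| ≤ ε)
    (hμ' : ∀ i, μ' i = μ i * (1 + εi i))
    (A : Matrix (Fin n) (Fin n) ℝ) (hA : A.IsSymm)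
    (hA01 : ∀ i j, 0 ≤ A i j ∧ A i j ≤ 1)
    (Aμ Aμ' : Matrix (Fin n) (Fin n) ℝ)
    (hAμ : Aμ = Matrix.diagonal (fun i => Real.sqrt (μ i)) * A *
        Matrix.diagonal (fun i => Real.sqrt (μ i)))
    (hAμ' : Aμ' = Matrix.diagonal (fun i => Real.sqrt (μ' i)) * A *
        Matrix.diagonal (fun i => Real.sqrt (μ' i))) :
    opNorm (Aμ' - Aμ) ≤ 2 * ε * n * opNorm Aμ := by
  have hε0 : 0 ≤ ε := (abs_nonneg _).trans (hεi ⟨0, hn⟩)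
  -- entry formulas
  have hAμe : ∀ i j, Aμ i j = Real.sqrt (μ i) * A i j * Real.sqrt (μ j) := by
    intro i j; rw [hAμ]; simp [Matrix.mul_apply, Matrix.diagonal, Finset.sum_ite_eq,
      Finset.sum_ite_eq']
  have hAμ'e : ∀ i j, Aμ' i j = Real.sqrt (μ' i) * A i j * Real.sqrt (μ' j) := by
    intro i j; rw [hAμ']; simp [Matrix.mul_apply, Matrix.diagonal, Finset.sum_ite_eq,
      Finset.sum_ite_eq']
  -- entrywise bound: |(Aμ' - Aμ) i j| ≤ ε * Aμ i j
  have hAμnn : ∀ i j, 0 ≤ Aμ i j := by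
    intro i j; rw [hAμe]
    have := (hA01 i j).1
    positivity
  have key : ∀ i j, |(Aμ' - Aμ) i j| ≤ ε * Aμ i j := by
    intro i j
    have h1i : (0:ℝ) ≤ 1 + εi i := by have := abs_le.1 (hεi i); linarith
    have h1j : (0:ℝ) ≤ 1 + εi j := by have := abs_le.1 (hεi j); linarith
    have hsi : Real.sqrt (μ' i) = Real.sqrt (μ i) * Real.sqrt (1 + εi i) := by
      rw [hμ' i, Real.sqrt_mul (hμpos i).le]
    have hsj : Real.sqrt (μ' j) = Real.sqrt (μ j) * Real.sqrt (1 + εi j) := by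
      rw [hμ' j, Real.sqrt_mul (hμpos j).le]
    have hE : |Real.sqrt (1 + εi i) * Real.sqrt (1 + εi j) - 1| ≤ ε := by
      rw [abs_le]
      constructor
      · have hub : 1 - ε ≤ Real.sqrt (1 + εi i) * Real.sqrt (1 + εi j) := by
          rw [← Real.sqrt_mul h1i]
          have : (1 - ε) ^ 2 ≤ (1 + εi i) * (1 + εi j) := by
            have hi := abs_le.1 (hεi i); have hj := abs_le.1 (hεi j)
            nlinarith
          calc (1 - ε) = Real.sqrt ((1 - ε) ^ 2) := by
                rw [Real.sqrt_sq (by linarith)]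
            _ ≤ _ := Real.sqrt_le_sqrt this
        linarith
      · have hub : Real.sqrt (1 + εi i) * Real.sqrt (1 + εi j) ≤ 1 + ε := by
          rw [← Real.sqrt_mul h1i]
          have : (1 + εi i) * (1 + εi j) ≤ (1 + ε) ^ 2 := by
            have hi := abs_le.1 (hεi i); have hj := abs_le.1 (hεi j)
            nlinarith
          calc Real.sqrt ((1 + εi i) * (1 + εi j)) ≤ Real.sqrt ((1 + ε) ^ 2) :=
                Real.sqrt_le_sqrt this
            _ = 1 + ε := Real.sqrt_sq (by linarith)
        linarith
    have hdiff : (Aμ' - Aμ) i j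
        = Aμ i j * (Real.sqrt (1 + εi i) * Real.sqrt (1 + εi j) - 1) := by
      simp only [Matrix.sub_apply, hAμ'e, hAμe, hsi, hsj]
      ring
    rw [hdiff, abs_mul, abs_of_nonneg (hAμnn i j), mul_comm (ε) _]
    exact mul_le_mul_of_nonneg_left hE (hAμnn i j)
  -- sum of squares bound
  have hsq : ∑ i, ∑ j, ((Aμ' - Aμ) i j) ^ 2 ≤ ε ^ 2 * ∑ i, ∑ j, (Aμ i j) ^ 2 := by
    rw [Finset.mul_sum]
    refine Finset.sum_le_sum fun i _ => ?_
    rw [Finset.mul_sum]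
    refine Finset.sum_le_sum fun j _ => ?_
    have := key i j
    have h2 : ((Aμ' - Aμ) i j) ^ 2 ≤ (ε * Aμ i j) ^ 2 := by
      rw [← sq_abs ((Aμ' - Aμ) i j)]
      exact pow_le_pow_left₀ (abs_nonneg _) this 2
    calc ((Aμ' - Aμ) i j) ^ 2 ≤ (ε * Aμ i j) ^ 2 := h2
      _ = ε ^ 2 * (Aμ i j) ^ 2 := by ring
  -- combine
  have h1 := opNorm_le_sqrt_sum_sq (Aμ' - Aμ)
  have h2 := sum_sq_le_opNorm Aμ
  have h3 : opNorm (Aμ' - Aμ) ≤ ε * Real.sqrt (↑n) * opNorm Aμ := by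
    calc opNorm (Aμ' - Aμ) ≤ Real.sqrt (∑ i, ∑ j, ((Aμ' - Aμ) i j) ^ 2) := h1
      _ ≤ Real.sqrt (ε ^ 2 * (↑n * (opNorm Aμ) ^ 2)) := by
          apply Real.sqrt_le_sqrt
          calc ∑ i, ∑ j, ((Aμ' - Aμ) i j) ^ 2 ≤ ε ^ 2 * ∑ i, ∑ j, (Aμ i j) ^ 2 := hsq
            _ ≤ ε ^ 2 * (↑n * (opNorm Aμ) ^ 2) := by
                exact mul_le_mul_of_nonneg_left h2 (sq_nonneg _)
      _ = ε * Real.sqrt (↑n) * opNorm Aμ := by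
          rw [Real.sqrt_mul (sq_nonneg _), Real.sqrt_mul (Nat.cast_nonneg _),
            Real.sqrt_sq hε0, Real.sqrt_sq (opNorm_nonneg _)]
          ring
  have hsn : Real.sqrt (↑n) ≤ (n:ℝ) := by
    have h1 : (1:ℝ) ≤ (n:ℝ) := by exact_mod_cast hn
    nlinarith [Real.sq_sqrt (by linarith : (0:ℝ) ≤ (n:ℝ)), Real.sqrt_nonneg ((n:ℝ)),
      sq_nonneg (Real.sqrt ((n:ℝ)) - 1)]
  calc opNorm (Aμ' - Aμ) ≤ ε * Real.sqrt (↑n) * opNorm Aμ := h3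
    _ ≤ ε * ↑n * opNorm Aμ := by
        apply mul_le_mul_of_nonneg_right _ (opNorm_nonneg _)
        exact mul_le_mul_of_nonneg_left hsn hε0
    _ ≤ 2 * ε * ↑n * opNorm Aμ := by
        have hn0 : (0:ℝ) ≤ (n:ℝ) := Nat.cast_nonneg _
        have hop := opNorm_nonneg Aμ
        have h0 : 0 ≤ ε * ↑n * opNorm Aμ :=
          mul_nonneg (mul_nonneg hε0 hn0) hop
        nlinarith
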